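/- Let θ_max ∈ (0, π). Then there exists R_b > 4/3 with θ_max < 2·arccos(2/(3R_b)). Moreover, for this R_b the following holds: if p, q, z ∈ ℝ² satisfy |p - z| ≤ 4/3, |q - z| ≤ 4/3, and the angle at z between p - z and q - z is at most θ_max, then the circular sector of B(z, R_b) bounded by the rays from z through p and through q is contained in B(p, R_b) ∪ B(q, R_b). -/

import Mathlib

open Real Set Metric

/-- Core algebraic lemma: if `B ≤ A`, `(2c²-1)AB ≤ P ≤ AB`, `X² = A² + 2P + B²`,
then `c·X·A ≤ A² + P`. -/
lemma key_alg (A B P c X : ℝ) (hB : 0 ≤ B) (hBA : B ≤ A)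
    (hP1 : (2 * c ^ 2 - 1) * (A * B) ≤ P) (hP2 : P ≤ A * B)
    (hc0 : 0 ≤ c) (hc1 : c ≤ 1) (hX : 0 ≤ X)
    (hXsq : X ^ 2 = A ^ 2 + 2 * P + B ^ 2) :
    c * X * A ≤ A ^ 2 + P := by
  have hA : 0 ≤ A := hB.trans hBA
  have hAB : 0 ≤ A - B := by linarith
  have hRHS : 0 ≤ A ^ 2 + P := by nlinarith [sq_nonneg c, mul_nonneg hA hB]
  -- Q := P + (2c²-1)AB + 2(1-c²)A² ≥ 0
  have hQ : 0 ≤ P + (2 * c ^ 2 - 1) * (A * B) + 2 * (1 - c ^ 2) * A ^ 2 := by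
    nlinarith [mul_nonneg (mul_nonneg (sub_nonneg.2 hc1) (by linarith : (0:ℝ) ≤ 1 + c)) (mul_nonneg hA hAB), mul_nonneg (mul_nonneg hA hB) (sq_nonneg c)]
  have h1 : 0 ≤ (P - (2 * c ^ 2 - 1) * (A * B)) *
      (P + (2 * c ^ 2 - 1) * (A * B) + 2 * (1 - c ^ 2) * A ^ 2) :=
    mul_nonneg (by linarith) hQ
  have h2 : 0 ≤ (1 - c ^ 2) * A ^ 2 * (A - B) * (A + (4 * c ^ 2 - 1) * B) := by
    have : 0 ≤ A + (4 * c ^ 2 - 1) * B := by nlinarith [mul_nonneg hB (sq_nonneg c)]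
    have h12 : 0 ≤ 1 - c ^ 2 := by nlinarith
    exact mul_nonneg (mul_nonneg (mul_nonneg h12 (sq_nonneg A)) hAB) this
  have hsq : (c * X * A) ^ 2 ≤ (A ^ 2 + P) ^ 2 := by
    have : (c * X * A) ^ 2 = c ^ 2 * A ^ 2 * (A ^ 2 + 2 * P + B ^ 2) := by
      rw [← hXsq]; ring
    nlinarith [h1, h2]
  have hL : 0 ≤ c * X * A := mul_nonneg (mul_nonneg hc0 hX) hA
  nlinarith [hsq, hL, hRHS]

/-- The final quadratic estimate for a sector corner. -/
lemma key_quad (Rb X U : ℝ) (hRb : (3:ℝ)/2 ≤ Rb) (hX0 : 0 ≤ X) (hX : X ≤ Rb)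
    (hU0 : 0 ≤ U) (hU : U ≤ 4/3) :
    3 * Rb * X ^ 2 + 3 * Rb * U ^ 2 - 4 * X * U ≤ 3 * Rb ^ 3 := by
  have t1 : 0 ≤ Rb * U * (4/3 - U) :=
    mul_nonneg (mul_nonneg (by linarith) hU0) (by linarith)
  have t2 : 0 ≤ (4/3 - U) * Rb * ((Rb - X) * (Rb + X)) :=
    mul_nonneg (mul_nonneg (by linarith) (by linarith))
      (mul_nonneg (by linarith) (by linarith))
  have t3 : 0 ≤ U * ((Rb - X) * (Rb * (Rb + X) - 16/9)) := by
    have : (16:ℝ)/9 ≤ Rb * (Rb + X) := by nlinarith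
    exact mul_nonneg hU0 (mul_nonneg (by linarith) (by linarith))
  nlinarith [t1, t2, t3]

lemma sq_le_imp {d R : ℝ} (hd : 0 ≤ d) (hR : 0 < R) (h : d ^ 2 ≤ R ^ 2) :
    d ≤ R := by nlinarith

set_option maxHeartbeats 1000000 in
theorem stmt_9 (θmax : ℝ) (hθ : θmax ∈ Set.Ioo 0 π) :
    ∃ Rb : ℝ, Rb > 4/3 ∧ θmax < 2 * Real.arccos (2 / (3 * Rb)) ∧
      ∀ p q z : EuclideanSpace ℝ (Fin 2),
        dist p z ≤ 4/3 → dist q z ≤ 4/3 →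
        InnerProductGeometry.angle (p - z) (q - z) ≤ θmax →
        ∀ w : EuclideanSpace ℝ (Fin 2), dist w z ≤ Rb →
          (∃ a b : ℝ, 0 ≤ a ∧ 0 ≤ b ∧ w - z = a • (p - z) + b • (q - z)) →
          w ∈ closedBall p Rb ∪ closedBall q Rb := by
  obtain ⟨hθ0, hθπ⟩ := hθ
  obtain ⟨cθ, hcθdef⟩ : ∃ c : ℝ, c = Real.cos (θmax / 2) := ⟨_, rfl⟩
  have hcθpos : 0 < cθ := by
    rw [hcθdef]
    apply Real.cos_pos_of_mem_Ioo
    constructor <;> [linarith [Real.pi_pos]; linarith]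
  have hcθ1 : cθ ≤ 1 := hcθdef ▸ Real.cos_le_one _
  obtain ⟨Rb, hRbdef⟩ : ∃ R : ℝ, R = max (3/2) (1/cθ) := ⟨_, rfl⟩
  have hRb32 : (3:ℝ)/2 ≤ Rb := hRbdef ▸ le_max_left _ _
  have hRbc : 1/cθ ≤ Rb := hRbdef ▸ le_max_right _ _
  have hRbpos : 0 < Rb := by linarith
  obtain ⟨y, hydef⟩ : ∃ y : ℝ, y = 2 / (3 * Rb) := ⟨_, rfl⟩
  have h6 : y * (3 * Rb) = 2 := by rw [hydef]; field_simp
  have hycθ : y < cθ := by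
    rw [hydef]
    have h1 : 1/Rb ≤ cθ := by
      rw [div_le_iff₀ hRbpos]
      rw [div_le_iff₀ hcθpos] at hRbc
      linarith [mul_comm Rb cθ]
    have h2 : 0 < 1/Rb := by positivity
    have : 2 / (3 * Rb) = (2/3) * (1/Rb) := by ring
    rw [this]; nlinarith
  have hypos : 0 < y := by rw [hydef]; positivity
  refine ⟨Rb, by linarith, ?_, ?_⟩
  · -- θmax < 2 arccos (2/(3Rb))
    have harc : Real.arccos cθ < Real.arccos (2 / (3 * Rb)) := by
      rw [← hydef]
      apply Real.strictAntiOn_arccos ⟨by linarith, by linarith⟩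
        ⟨by linarith, hcθ1⟩ hycθ
    have : Real.arccos cθ = θmax / 2 := by
      rw [hcθdef]
      exact Real.arccos_cos (by linarith) (by linarith)
    linarith
  · intro p q z hp hq hang w hw ⟨a, b, ha, hb, hab⟩
    obtain ⟨u, hu⟩ : ∃ u, u = p - z := ⟨_, rfl⟩
    obtain ⟨v, hv⟩ : ∃ v, v = q - z := ⟨_, rfl⟩
    obtain ⟨x, hx⟩ : ∃ x, x = w - z := ⟨_, rfl⟩
    rw [← hu, ← hv] at hang
    have hab' : x = a • u + b • v := by rw [hx, hu, hv]; exact hab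
    clear hab
    have hab := hab'
    have hU : ‖u‖ ≤ 4/3 := by rwa [hu, ← dist_eq_norm]
    have hV : ‖v‖ ≤ 4/3 := by rwa [hv, ← dist_eq_norm]
    have hXRb : ‖x‖ ≤ Rb := by rwa [hx, ← dist_eq_norm]
    -- inner ℝ product bound from the angle hypothesis
    have hcosmax : Real.cos θmax = 2 * cθ ^ 2 - 1 := by
      rw [hcθdef, ← Real.cos_two_mul]
      congr 1; ring
    have hT : (2 * cθ ^ 2 - 1) * (‖u‖ * ‖v‖) ≤ (inner ℝ u v : ℝ) := by
      have hangle01 := InnerProductGeometry.angle_nonneg u v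
      have hcos : Real.cos θmax ≤ Real.cos (InnerProductGeometry.angle u v) :=
        Real.cos_le_cos_of_nonneg_of_le_pi hangle01 (le_of_lt hθπ) hang
      rw [InnerProductGeometry.cos_angle, hcosmax] at hcos
      rcases eq_or_lt_of_le (mul_nonneg (norm_nonneg u) (norm_nonneg v)) with h0 | h0
      · have habs : |(inner ℝ u v : ℝ)| ≤ ‖u‖ * ‖v‖ := abs_real_inner_le_norm u v
        have hz : (inner ℝ u v : ℝ) = 0 :=
          abs_eq_zero.mp (le_antisymm (habs.trans_eq h0.symm) (abs_nonneg _))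
        rw [hz, ← h0]; simp
      · rw [le_div_iff₀ h0] at hcos
        linarith
    have hT2 : (inner ℝ u v : ℝ) ≤ ‖u‖ * ‖v‖ := real_inner_le_norm u v
    -- expansion of ‖x‖²
    have hXsq : ‖x‖ ^ 2 = (a * ‖u‖) ^ 2 + 2 * (a * b * inner ℝ u v) + (b * ‖v‖) ^ 2 := by
      rw [hab, norm_add_sq_real, norm_smul, norm_smul, real_inner_smul_left,
        real_inner_smul_right, Real.norm_eq_abs, Real.norm_eq_abs,
        abs_of_nonneg ha, abs_of_nonneg hb]
      ring
    have hyRb : y ≤ cθ := le_of_lt hycθ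
    -- the symmetric core: from A ≥ B derive membership in the ball around p
    have core : ∀ (p' : EuclideanSpace ℝ (Fin 2)) (u' v' : EuclideanSpace ℝ (Fin 2))
        (a' b' : ℝ), 0 ≤ a' → 0 ≤ b' → ‖u'‖ ≤ 4/3 → u' = p' - z →
        x = a' • u' + b' • v' →
        (2 * cθ ^ 2 - 1) * (‖u'‖ * ‖v'‖) ≤ (inner ℝ u' v' : ℝ) →
        (inner ℝ u' v' : ℝ) ≤ ‖u'‖ * ‖v'‖ →
        b' * ‖v'‖ ≤ a' * ‖u'‖ →
        w ∈ closedBall p' Rb := by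
      intro p' u' v' a' b' ha' hb' hU' hup hxab hT' hT2' hBA
      have hA0 : 0 ≤ a' * ‖u'‖ := mul_nonneg ha' (norm_nonneg _)
      have hB0 : 0 ≤ b' * ‖v'‖ := mul_nonneg hb' (norm_nonneg _)
      have hXsq' : ‖x‖ ^ 2 = (a' * ‖u'‖) ^ 2 + 2 * (a' * b' * inner ℝ u' v')
          + (b' * ‖v'‖) ^ 2 := by
        rw [hxab, norm_add_sq_real, norm_smul, norm_smul, real_inner_smul_left,
          real_inner_smul_right, Real.norm_eq_abs, Real.norm_eq_abs,
          abs_of_nonneg ha', abs_of_nonneg hb']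
        ring
      have hP1 : (2 * cθ ^ 2 - 1) * ((a' * ‖u'‖) * (b' * ‖v'‖)) ≤
          a' * b' * (inner ℝ u' v' : ℝ) := by
        have h := mul_le_mul_of_nonneg_left hT' (mul_nonneg ha' hb')
        calc (2 * cθ ^ 2 - 1) * ((a' * ‖u'‖) * (b' * ‖v'‖))
            = (a' * b') * ((2 * cθ ^ 2 - 1) * (‖u'‖ * ‖v'‖)) := by ring
          _ ≤ (a' * b') * (inner ℝ u' v' : ℝ) := h
          _ = a' * b' * (inner ℝ u' v' : ℝ) := by ring
      have hP2 : a' * b' * (inner ℝ u' v' : ℝ) ≤ (a' * ‖u'‖) * (b' * ‖v'‖) := by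
        have h := mul_le_mul_of_nonneg_left hT2' (mul_nonneg ha' hb')
        calc a' * b' * (inner ℝ u' v' : ℝ) = (a' * b') * (inner ℝ u' v' : ℝ) := by ring
          _ ≤ (a' * b') * (‖u'‖ * ‖v'‖) := h
          _ = (a' * ‖u'‖) * (b' * ‖v'‖) := by ring
      have hkey := key_alg (a' * ‖u'‖) (b' * ‖v'‖) (a' * b' * inner ℝ u' v') cθ ‖x‖
        hB0 hBA hP1 hP2 (le_of_lt hcθpos) hcθ1 (norm_nonneg x) hXsq'
      have hxu : (inner ℝ x u' : ℝ) = a' * ‖u'‖ ^ 2 + b' * inner ℝ u' v' := by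
        rw [hxab, inner_add_left, real_inner_smul_left, real_inner_smul_left,
          real_inner_self_eq_norm_sq, real_inner_comm v' u']
      -- chain: 2/(3Rb) * ‖x‖ * ‖u'‖ ≤ ⟪x,u'⟫
      have hchain : y * (‖x‖ * ‖u'‖) ≤ (inner ℝ x u' : ℝ) := by
        have h1 : cθ * ‖x‖ * (a' * ‖u'‖) ≤ (a' * ‖u'‖) ^ 2 + a' * b' * inner ℝ u' v' :=
          hkey
        have hXU : 0 ≤ ‖x‖ * ‖u'‖ := mul_nonneg (norm_nonneg _) (norm_nonneg _)
        have h2 : y * (‖x‖ * ‖u'‖) ≤ cθ * (‖x‖ * ‖u'‖) :=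
          mul_le_mul_of_nonneg_right hyRb hXU
        rcases eq_or_lt_of_le ha' with ha0 | ha0
        · -- a' = 0 : then b'‖v'‖ = 0 and x = 0
          have hBz : b' * ‖v'‖ = 0 :=
            le_antisymm (by rw [← ha0] at hBA; simpa using hBA) hB0
          have hbv : b' * (inner ℝ u' v' : ℝ) = 0 := by
            rcases mul_eq_zero.mp hBz with h | h
            · rw [h]; ring
            · rw [norm_eq_zero.mp h, inner_zero_right]; ring
          have hxsq0 : ‖x‖ ^ 2 = 0 := by
            rw [hXsq', ← ha0, hBz]
            have : (0:ℝ) * b' * (inner ℝ u' v' : ℝ) = 0 := by ring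
            rw [this]; norm_num
          have hxz : ‖x‖ = 0 :=
            pow_eq_zero_iff (two_ne_zero) |>.mp hxsq0
          rw [hxz, hxu, ← ha0, hbv]
          simp
        · -- a' > 0 : divide h1 by a'
          have h3 : cθ * (‖x‖ * ‖u'‖) * a' ≤
              (a' * ‖u'‖ ^ 2 + b' * (inner ℝ u' v' : ℝ)) * a' := by
            calc cθ * (‖x‖ * ‖u'‖) * a' = cθ * ‖x‖ * (a' * ‖u'‖) := by ring
              _ ≤ (a' * ‖u'‖) ^ 2 + a' * b' * (inner ℝ u' v' : ℝ) := h1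
              _ = (a' * ‖u'‖ ^ 2 + b' * (inner ℝ u' v' : ℝ)) * a' := by ring
          have h3' : cθ * (‖x‖ * ‖u'‖) ≤ a' * ‖u'‖ ^ 2 + b' * (inner ℝ u' v' : ℝ) :=
            le_of_mul_le_mul_right h3 ha0
          rw [hxu]
          linarith
      -- conclude: ‖w - p'‖² ≤ Rb²
      have hwp : w - p' = x - u' := by rw [hx, hup]; abel
      have hnorm : ‖w - p'‖ ^ 2 = ‖x‖ ^ 2 - 2 * inner ℝ x u' + ‖u'‖ ^ 2 := by
        rw [hwp, norm_sub_sq_real]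
      have hfin : ‖w - p'‖ ^ 2 ≤ Rb ^ 2 := by
        have hq := key_quad Rb ‖x‖ ‖u'‖ hRb32 (norm_nonneg _) hXRb (norm_nonneg _) hU'
        have h3Rb : (0:ℝ) < 3 * Rb := by linarith
        have hm := mul_le_mul_of_nonneg_right hchain (le_of_lt h3Rb)
        have h7 : y * (‖x‖ * ‖u'‖) * (3 * Rb) = 2 * (‖x‖ * ‖u'‖) := by
          have h8 : y * (‖x‖ * ‖u'‖) * (3 * Rb) = (‖x‖ * ‖u'‖) * (y * (3 * Rb)) := by
            ring
          rw [h8, h6]; ring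
        rw [h7] at hm
        have hmul : 3 * Rb * (‖x‖ ^ 2 - 2 * (inner ℝ x u' : ℝ) + ‖u'‖ ^ 2) ≤
            3 * Rb * Rb ^ 2 := by linarith [hq, hm]
        have := (mul_le_mul_iff_of_pos_left h3Rb).mp hmul
        rw [hnorm]; linarith
      rw [mem_closedBall, dist_eq_norm]
      exact sq_le_imp (norm_nonneg _) hRbpos hfin
    rcases le_total (b * ‖v‖) (a * ‖u‖) with hc | hc
    · exact Or.inl (core p u v a b ha hb hU hu hab hT hT2 hc)
    · refine Or.inr (core q v u b a hb ha hV hv ?_ ?_ ?_ hc)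
      · rw [hab]; abel
      · rw [real_inner_comm, mul_comm ‖v‖]; exact hT
      · rw [real_inner_comm, mul_comm ‖v‖]; exact hT2
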